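/- Assume (μ,σ,f) satisfies (k-MLLC) for some k ∈ ℕ₀ and let λ > 0. Define transformed coefficients (μ̄,σ̄)(t,x,y,z) := λ·(μ,σ)(t,λ^{-1}x,y,z) and f̄(t,x,y,z) := f(t,λ^{-1}x,y,z), and let h̄⁽ⁱ⁾ and φ̄⁽ⁱ⁾ be defined from (μ̄,σ̄,f̄) by the same recursion as h⁽ⁱ⁾ and φ⁽ⁱ⁾ are defined from (μ,σ,f) (note L_{σ̄,z} = λ·L_{σ,z}). Then for all i ∈ {0,…,k} and all admissible arguments: h̄⁽ⁱ⁾(t,x,y⁽⁰⁾,z⁽⁰⁾,…,y⁽ⁱ⁾,z⁽ⁱ⁾) = λ^{−i}·h⁽ⁱ⁾(t,λ^{−1}x,λ⁰y⁽⁰⁾,λ⁰z⁽⁰⁾,…,λⁱy⁽ⁱ⁾,λⁱz⁽ⁱ⁾) (for i ≥ 1) and φ̄⁽ⁱ⁾(t,x,y⁽⁰⁾,z⁽⁰⁾,…,y⁽ⁱ⁾,z⁽ⁱ⁾) = λ^{−i}·φ⁽ⁱ⁾(t,λ^{−1}x,λ⁰y⁽⁰⁾,λ⁰z⁽⁰⁾,…,λⁱy⁽ⁱ⁾,λⁱz⁽ⁱ⁾);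 here (t,x,y⁽⁰⁾,z⁽⁰⁾,…,y⁽ⁱ⁾,z⁽ⁱ⁾) ranges over the domain Θ̄_i built from L_{σ̄,z}, and the scaled argument lies in Θ_i. -/

import Mathlib

namespace DecouplingFBSDE

/-! ### Generalized matrices

`Tens n m k` is the space `ℝ^{m×_k n}` of real valued maps on `[m]×[n]^k`;
`TensZ n m d k` is the space `ℝ^{(m×d)×_k n}` of real valued maps on `[m]×[d]×[n]^k`. -/

/-- `ℝ^{m×_k n}`. -/
abbrev Tens (n m k : ℕ) : Type := Fin m → (Fin k → Fin n) → ℝ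

/-- `ℝ^{(m×d)×_k n}`. -/
abbrev TensZ (n m d k : ℕ) : Type := Fin m → Fin d → (Fin k → Fin n) → ℝ

/-- `ℝ^{n×d}`, the space of values of `σ`. -/
abbrev Sig (n d : ℕ) : Type := Fin n → Fin d → ℝ

/-- The space of the variables `(x, y⁽⁰⁾, z⁽⁰⁾)` (identifying `ℝᵐ` with `Tens n m 0`
and `ℝ^{m×d}` with `TensZ n m d 0`). -/
abbrev Arg (n m d : ℕ) : Type := (Fin n → ℝ) × Tens n m 0 × TensZ n m d 0

variable {n m d : ℕ}

/-- Frobenius norm on `Tens n m k`. -/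
noncomputable def frobT {k : ℕ} (y : Tens n m k) : ℝ :=
  Real.sqrt (∑ a, ∑ c, (y a c) ^ 2)

/-- Frobenius norm on `TensZ n m d k`. -/
noncomputable def frobTZ {k : ℕ} (z : TensZ n m d k) : ℝ :=
  Real.sqrt (∑ a, ∑ b, ∑ c, (z a b c) ^ 2)

/-- Frobenius norm on `ℝ^{n×d}`. -/
noncomputable def frobS (s : Sig n d) : ℝ :=
  Real.sqrt (∑ i, ∑ j, (s i j) ^ 2)

/-- `y⁽¹⁾ ∈ ℝ^{m×_1 n}` as an ordinary `m×n` matrix. -/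
def mat1 (v : Tens n m 1) : Matrix (Fin m) (Fin n) ℝ :=
  Matrix.of fun a i => v a (fun _ => i)

/-- Operator norm of `y⁽¹⁾ ∈ ℝ^{m×n}` with respect to the Euclidean norms. -/
noncomputable def opN (v : Tens n m 1) : ℝ :=
  ‖LinearMap.toContinuousLinearMap (Matrix.toEuclideanLin (mat1 v))‖

/-- Standard basis vector of `ℝⁿ`. -/
def eX (c : Fin n) : Fin n → ℝ := Pi.single c 1

/-- Standard basis vector of `ℝᵐ ≅ Tens n m 0`. -/
def eY (a : Fin m) : Tens n m 0 := fun a' _ => if a' = a then 1 else 0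

/-- Standard basis element of `ℝ^{m×d} ≅ TensZ n m d 0`. -/
def eZ (a : Fin m) (b : Fin d) : TensZ n m d 0 :=
  fun a' b' _ => if a' = a ∧ b' = b then 1 else 0

/-- `σ_x(θ)` applied to a direction `v ∈ ℝⁿ`. -/
noncomputable def sx (σ : ℝ → Arg n m d → Sig n d) (t : ℝ) (p : Arg n m d)
    (v : Fin n → ℝ) : Sig n d := fderiv ℝ (σ t) p (v, 0, 0)

/-- `σ_y(θ)` applied to a direction `w ∈ ℝᵐ`. -/
noncomputable def sy (σ : ℝ → Arg n m d → Sig n d) (t : ℝ) (p : Arg n m d)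
    (w : Tens n m 0) : Sig n d := fderiv ℝ (σ t) p (0, w, 0)

/-- `σ_z(θ)` applied to a direction `ζ ∈ ℝ^{m×d}`. -/
noncomputable def sz (σ : ℝ → Arg n m d → Sig n d) (t : ℝ) (p : Arg n m d)
    (ζ : TensZ n m d 0) : Sig n d := fderiv ℝ (σ t) p (0, 0, ζ)

/-- `μ_x(θ)` applied to a direction `v ∈ ℝⁿ`. -/
noncomputable def mx (μ : ℝ → Arg n m d → (Fin n → ℝ)) (t : ℝ) (p : Arg n m d)
    (v : Fin n → ℝ) : Fin n → ℝ := fderiv ℝ (μ t) p (v, 0, 0)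

/-- `μ_y(θ)` applied to a direction `w ∈ ℝᵐ`. -/
noncomputable def my (μ : ℝ → Arg n m d → (Fin n → ℝ)) (t : ℝ) (p : Arg n m d)
    (w : Tens n m 0) : Fin n → ℝ := fderiv ℝ (μ t) p (0, w, 0)

/-- `μ_z(θ)` applied to a direction `ζ ∈ ℝ^{m×d}`. -/
noncomputable def mz (μ : ℝ → Arg n m d → (Fin n → ℝ)) (t : ℝ) (p : Arg n m d)
    (ζ : TensZ n m d 0) : Fin n → ℝ := fderiv ℝ (μ t) p (0, 0, ζ)

/-- The generalized matrix `Id_{m×d} − y⁽¹⁾σ_z(θ) ∈ ℝ^{(m×d)×(m×d)}`, viewed as an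
`(m·d)×(m·d)` matrix. -/
noncomputable def Gmat (σ : ℝ → Arg n m d → Sig n d) (t : ℝ) (p : Arg n m d)
    (y1 : Tens n m 1) : Matrix (Fin m × Fin d) (Fin m × Fin d) ℝ :=
  1 - Matrix.of fun ab pq => ∑ i, mat1 y1 ab.1 i * sz σ t p (eZ pq.1 pq.2) i ab.2

/-- `y⁽¹⁾σ_x(θ) + y⁽¹⁾σ_y(θ)y⁽¹⁾ + z⁽¹⁾ ∈ ℝ^{(m×d)×n}`. -/
noncomputable def Rh (σ : ℝ → Arg n m d → Sig n d) (t : ℝ) (p : Arg n m d)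
    (y1 : Tens n m 1) (z1 : TensZ n m d 1) : TensZ n m d 1 :=
  fun a b c =>
    (∑ i, mat1 y1 a i * sx σ t p (eX (c 0)) i b)
    + (∑ j, (∑ i, mat1 y1 a i * sy σ t p (eY j) i b) * mat1 y1 j (c 0))
    + z1 a b c

/-- `h⁽¹⁾(θ₁) := (Id_{m×d} − y⁽¹⁾σ_z(θ))⁻¹ (y⁽¹⁾σ_x(θ) + y⁽¹⁾σ_y(θ)y⁽¹⁾ + z⁽¹⁾)`. -/
noncomputable def h1 (σ : ℝ → Arg n m d → Sig n d) (t : ℝ) (p : Arg n m d)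
    (y1 : Tens n m 1) (z1 : TensZ n m d 1) : TensZ n m d 1 :=
  fun a b c =>
    ∑ pq : Fin m × Fin d, (Gmat σ t p y1)⁻¹ (a, b) pq * Rh σ t p y1 z1 pq.1 pq.2 c

/-- The `n×n` matrix `σ⁽ᵇ⁾_x(θ) + σ⁽ᵇ⁾_y(θ)y⁽¹⁾ + σ⁽ᵇ⁾_z(θ)h⁽¹⁾(θ₁)` for the `b`-th
column of `σ`. -/
noncomputable def Bmat (σ : ℝ → Arg n m d → Sig n d) (t : ℝ) (p : Arg n m d)
    (y1 : Tens n m 1) (z1 : TensZ n m d 1) (b : Fin d) : Fin n → Fin n → ℝ :=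
  fun i c =>
    sx σ t p (eX c) i b
    + (∑ a, sy σ t p (eY a) i b * mat1 y1 a c)
    + ∑ pq : Fin m × Fin d,
        sz σ t p (eZ pq.1 pq.2) i b * h1 σ t p y1 z1 pq.1 pq.2 (fun _ => c)

/-- The `n×n` matrix `μ_x(θ) + μ_y(θ)y⁽¹⁾ + μ_z(θ)h⁽¹⁾(θ₁)`. -/
noncomputable def Amat (μ : ℝ → Arg n m d → (Fin n → ℝ)) (σ : ℝ → Arg n m d → Sig n d)
    (t : ℝ) (p : Arg n m d) (y1 : Tens n m 1) (z1 : TensZ n m d 1) :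
    Fin n → Fin n → ℝ :=
  fun i c =>
    mx μ t p (eX c) i
    + (∑ a, my μ t p (eY a) i * mat1 y1 a c)
    + ∑ pq : Fin m × Fin d,
        mz μ t p (eZ pq.1 pq.2) i * h1 σ t p y1 z1 pq.1 pq.2 (fun _ => c)

/-- Product of a generalized matrix `y ∈ ℝ^{m×_{k+1} n}` with an `n×n` matrix `A`,
contracting the trailing index of `y` with the first index of `A`. -/
def mulRight {k : ℕ} (y : Tens n m (k + 1)) (A : Fin n → Fin n → ℝ) :
    Tens n m (k + 1) :=
  fun a c => ∑ j, y a (Fin.snoc (Fin.init c) j) * A j (c (Fin.last k))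

/-- `h⁽ᵏ⁾(θ_k)` for `k ≥ 2`:
`h⁽ᵏ'ʲ⁾(θ_k) = z⁽ᵏ'ʲ⁾ + y⁽ᵏ⁾(σ⁽ʲ⁾_x(θ) + σ⁽ʲ⁾_y(θ)y⁽¹⁾ + σ⁽ʲ⁾_z(θ)h⁽¹⁾(θ₁))`. -/
noncomputable def hK (σ : ℝ → Arg n m d → Sig n d) (t : ℝ) (p : Arg n m d)
    (y1 : Tens n m 1) (z1 : TensZ n m d 1) {k : ℕ}
    (yk : Tens n m (k + 1)) (zk : TensZ n m d (k + 1)) : TensZ n m d (k + 1) :=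
  fun a b c => zk a b c + mulRight yk (Bmat σ t p y1 z1 b) a c

/-- `h⁽ᵏ⁾` for every `k ≥ 1`: `h⁽¹⁾` for `k = 1` and the affine formula for `k ≥ 2`. -/
noncomputable def hGen (σ : ℝ → Arg n m d → Sig n d) (t : ℝ) (p : Arg n m d)
    (y1 : Tens n m 1) (z1 : TensZ n m d 1) :
    {k : ℕ} → Tens n m (k + 1) → TensZ n m d (k + 1) → TensZ n m d (k + 1)
  | 0, yk, zk => h1 σ t p yk zk
  | _ + 1, yk, zk => hK σ t p y1 z1 yk zk

/-- The state space `(x, y⁽⁰⁾, z⁽⁰⁾, …, y⁽ⁱ⁾, z⁽ⁱ⁾)` of the spatial variables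
of `Θ_i`. -/
abbrev EE (n m d i : ℕ) : Type :=
  (Fin n → ℝ) × ((j : Fin (i + 1)) → Tens n m j) × ((j : Fin (i + 1)) → TensZ n m d j)

/-- `φ_x(θ) ∈ ℝ^{m×_i n×n}`, reassembled as an element of `ℝ^{m×_{i+1} n}` (the trailing
index runs through the `x`-directions). -/
def appX {i : ℕ} (L : (Fin n → ℝ) → Tens n m i) : Tens n m (i + 1) :=
  fun a c => L (eX (c (Fin.last i))) a (Fin.init c)

/-- Product `φ_{y⁽ʲ⁾}(θ)·y`, applying the linear map `L` slice-wise in the trailing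
index of `y ∈ ℝ^{m×_{j+1} n}`. -/
def appY {j i : ℕ} (L : Tens n m j → Tens n m i) (y : Tens n m (j + 1)) :
    Tens n m (i + 1) :=
  fun a c => L (fun a' c' => y a' (Fin.snoc c' (c (Fin.last i)))) a (Fin.init c)

/-- Product `φ_{z⁽ʲ⁾}(θ)·z`, applying the linear map `L` slice-wise in the trailing
index of `z ∈ ℝ^{(m×d)×_{j+1} n}`. -/
def appZ {j i : ℕ} (L : TensZ n m d j → Tens n m i) (z : TensZ n m d (j + 1)) :
    Tens n m (i + 1) :=
  fun a c => L (fun a' b' c' => z a' b' (Fin.snoc c' (c (Fin.last i)))) a (Fin.init c)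

/-- Partial derivative in the direction of `x`, extracted from a total derivative. -/
noncomputable def Dx {i : ℕ} (D : EE n m d i →L[ℝ] Tens n m i) :
    (Fin n → ℝ) → Tens n m i :=
  fun v => D (v, 0, 0)

/-- Partial derivative in the direction of `y⁽ʲ⁾`, extracted from a total derivative. -/
noncomputable def Dyp {i : ℕ} (D : EE n m d i →L[ℝ] Tens n m i) (j : Fin (i + 1)) :
    Tens n m j → Tens n m i :=
  fun w => D (0, Pi.single j w, 0)

/-- Partial derivative in the direction of `z⁽ʲ⁾`, extracted from a total derivative. -/
noncomputable def Dzp {i : ℕ} (D : EE n m d i →L[ℝ] Tens n m i) (j : Fin (i + 1)) :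
    TensZ n m d j → Tens n m i :=
  fun w => D (0, 0, Pi.single j w)

/-- The type of the function `φ⁽ⁱ⁾`. -/
abbrev PhiFun (n m d i : ℕ) : Type := ℝ → EE n m d i → Tens n m i

/-- The right hand side of the recursion defining `φ⁽ⁱ⁺¹⁾` from the derivative `D`
of `φ⁽ⁱ⁾`:
`φ⁽ⁱ⁺¹⁾ = φ⁽ⁱ⁾_x + Σ_j (φ⁽ⁱ⁾_{y⁽ʲ⁾}y⁽ʲ⁺¹⁾ + φ⁽ⁱ⁾_{z⁽ʲ⁾}h⁽ʲ⁺¹⁾)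
         − y⁽ⁱ⁺¹⁾(μ_x + μ_y y⁽¹⁾ + μ_z h⁽¹⁾) − Σ_b z⁽ⁱ⁺¹'ᵇ⁾(σ⁽ᵇ⁾_x + σ⁽ᵇ⁾_y y⁽¹⁾ + σ⁽ᵇ⁾_z h⁽¹⁾)`. -/
noncomputable def phiStep {i : ℕ} (μ : ℝ → Arg n m d → (Fin n → ℝ))
    (σ : ℝ → Arg n m d → Sig n d) (t : ℝ) (D : EE n m d i →L[ℝ] Tens n m i)
    (x : Fin n → ℝ) (Y : (j : Fin (i + 2)) → Tens n m j)
    (Z : (j : Fin (i + 2)) → TensZ n m d j) : Tens n m (i + 1) :=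
  (appX (Dx D)
      + ∑ j : Fin (i + 1),
          (appY (Dyp D j) (Y j.succ)
            + appZ (Dzp D j)
                (hGen σ t (x, Y ⟨0, by omega⟩, Z ⟨0, by omega⟩)
                  (Y ⟨1, by omega⟩) (Z ⟨1, by omega⟩) (Y j.succ) (Z j.succ))))
    - mulRight (Y (Fin.last (i + 1)))
        (Amat μ σ t (x, Y ⟨0, by omega⟩, Z ⟨0, by omega⟩)
          (Y ⟨1, by omega⟩) (Z ⟨1, by omega⟩))
    - ∑ b : Fin d,
        mulRight (fun a c => Z (Fin.last (i + 1)) a b c)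
          (Bmat σ t (x, Y ⟨0, by omega⟩, Z ⟨0, by omega⟩)
            (Y ⟨1, by omega⟩) (Z ⟨1, by omega⟩) b)

/-- The family `(φ⁽⁰⁾, …, φ⁽ᵏ⁾)` satisfies the defining recursion of the generators
of the backward equations for the spatial derivatives of the decoupling field:
`φ⁽⁰⁾ = f` and, at every point of `Θ_{i+1}`, `φ⁽ⁱ⁾` is (classically) differentiable
in `(x, y⁽⁰⁾, z⁽⁰⁾, …, y⁽ⁱ⁾, z⁽ⁱ⁾)` and `φ⁽ⁱ⁺¹⁾` is given by the recursion formula. -/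
structure IsPhiChain (n m d k : ℕ) (T Lz : ℝ)
    (μ : ℝ → Arg n m d → (Fin n → ℝ)) (σ : ℝ → Arg n m d → Sig n d)
    (f : ℝ → Arg n m d → Tens n m 0)
    (φ : (i : ℕ) → PhiFun n m d i) : Prop where
  base : ∀ t ∈ Set.Icc (0:ℝ) T, ∀ p : EE n m d 0,
    φ 0 t p = f t (p.1, p.2.1 ⟨0, by omega⟩, p.2.2 ⟨0, by omega⟩)
  step : ∀ i : ℕ, i + 1 ≤ k → ∀ t ∈ Set.Icc (0:ℝ) T,
    ∀ (x : Fin n → ℝ) (Y : (j : Fin (i + 2)) → Tens n m j)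
      (Z : (j : Fin (i + 2)) → TensZ n m d j),
      Lz * opN (Y ⟨1, by omega⟩) < 1 →
      ∃ D : EE n m d i →L[ℝ] Tens n m i,
        HasFDerivAt (φ i t) D (x, fun j => Y j.castSucc, fun j => Z j.castSucc) ∧
        φ (i + 1) t (x, Y, Z) = phiStep μ σ t D x Y Z

/-- The modified local Lipschitz conditions `(k-MLLC)` for `(μ,σ,f)`:
`μ, σ, f` are deterministic, `k` times classically differentiable in `(x,y,z)`,
they and their derivatives up to order `k` are Lipschitz continuous in `(x,y,z)`
on sets with bounded `z`-component (uniformly in `t ∈ [0,T]`),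
`‖μ(·,0,0,0)‖_∞, ‖f(·,0,0,0)‖_∞, ‖σ(·,·,·,0)‖_∞ < ∞`, and `σ` is Lipschitz
continuous in `z` with constant `Lz` with respect to Frobenius norms. -/
structure MLLC (n m d k : ℕ) (T : ℝ)
    (μ : ℝ → Arg n m d → (Fin n → ℝ)) (σ : ℝ → Arg n m d → Sig n d)
    (f : ℝ → Arg n m d → Tens n m 0) (Lz : ℝ) : Prop where
  smooth_mu : ∀ t ∈ Set.Icc (0:ℝ) T, ContDiff ℝ (k : ℕ∞) (μ t)
  smooth_sigma : ∀ t ∈ Set.Icc (0:ℝ) T, ContDiff ℝ (k : ℕ∞) (σ t)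
  smooth_f : ∀ t ∈ Set.Icc (0:ℝ) T, ContDiff ℝ (k : ℕ∞) (f t)
  lipschitz_on_bounded : ∀ R : ℝ, ∃ L : NNReal, ∀ t ∈ Set.Icc (0:ℝ) T, ∀ j : ℕ, j ≤ k →
    LipschitzOnWith L (iteratedFDeriv ℝ j (μ t)) {p : Arg n m d | frobTZ p.2.2 ≤ R} ∧
    LipschitzOnWith L (iteratedFDeriv ℝ j (σ t)) {p : Arg n m d | frobTZ p.2.2 ≤ R} ∧
    LipschitzOnWith L (iteratedFDeriv ℝ j (f t)) {p : Arg n m d | frobTZ p.2.2 ≤ R}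
  bounded_at_zero : ∃ C : ℝ, ∀ t ∈ Set.Icc (0:ℝ) T,
    ‖μ t 0‖ ≤ C ∧ ‖f t 0‖ ≤ C ∧ ∀ (x : Fin n → ℝ) (y : Tens n m 0), ‖σ t (x, y, 0)‖ ≤ C
  lz_nonneg : 0 ≤ Lz
  lz_lipschitz : ∀ t ∈ Set.Icc (0:ℝ) T, ∀ (x : Fin n → ℝ) (y : Tens n m 0)
    (z z' : TensZ n m d 0),
    frobS (σ t (x, y, z) - σ t (x, y, z')) ≤ Lz * frobTZ (z - z')



section Helpers

variable {n m d : ℕ}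

/-- The scaling map on `Arg`. -/
noncomputable def gmap (lam : ℝ) (p : Arg n m d) : Arg n m d := (lam⁻¹ • p.1, p.2.1, p.2.2)

/-- The scaling map on `Arg` as a continuous linear map. -/
noncomputable def Gclm (lam : ℝ) : Arg n m d →L[ℝ] Arg n m d :=
  ((lam⁻¹ : ℝ) • ContinuousLinearMap.id ℝ (Fin n → ℝ)).prodMap
    (ContinuousLinearMap.id ℝ (Tens n m 0 × TensZ n m d 0))

lemma Gclm_apply (lam : ℝ) (p : Arg n m d) : Gclm lam p = gmap lam p := by
  simp [Gclm, gmap, Prod.map]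

lemma fderiv_scale {V : Type*} [NormedAddCommGroup V] [NormedSpace ℝ V]
    (lam c : ℝ) (F F' : Arg n m d → V)
    (hF' : ∀ p, F' p = c • F (gmap lam p)) (p : Arg n m d)
    (hd : DifferentiableAt ℝ F (gmap lam p)) :
    fderiv ℝ F' p = c • ((fderiv ℝ F (gmap lam p)).comp (Gclm lam)) := by
  have hG : HasFDerivAt (fun q : Arg n m d => Gclm lam q) (Gclm lam) p :=
    (Gclm (n := n) (m := m) (d := d) lam).hasFDerivAt
  have h1 : HasFDerivAt F (fderiv ℝ F (gmap lam p)) (Gclm lam p) := by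
    rw [Gclm_apply]; exact hd.hasFDerivAt
  have h2 : HasFDerivAt (fun q => F (Gclm lam q))
      ((fderiv ℝ F (gmap lam p)).comp (Gclm lam)) p := h1.comp p hG
  have h3 : HasFDerivAt F' (c • (fderiv ℝ F (gmap lam p)).comp (Gclm lam)) p := by
    have := h2.const_smul c
    refine this.congr_of_eventuallyEq ?_
    filter_upwards with q
    rw [hF' q]; simp only [Pi.smul_apply, Gclm_apply]
  exact h3.fderiv

end Helpers
section Scale

variable {n m d : ℕ} {lam : ℝ}
variable {σ σ' : ℝ → Arg n m d → Sig n d}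
variable {μ μ' : ℝ → Arg n m d → (Fin n → ℝ)}
variable {t : ℝ} {p : Arg n m d}

lemma sz_scale (hσ' : ∀ p, σ' t p = lam • σ t (gmap lam p))
    (hd : DifferentiableAt ℝ (σ t) (gmap lam p)) (ζ : TensZ n m d 0) :
    sz σ' t p ζ = lam • sz σ t (gmap lam p) ζ := by
  unfold sz
  rw [fderiv_scale lam lam (σ t) (σ' t) hσ' p hd]
  simp [Gclm, Prod.map]

lemma sy_scale (hσ' : ∀ p, σ' t p = lam • σ t (gmap lam p))
    (hd : DifferentiableAt ℝ (σ t) (gmap lam p)) (w : Tens n m 0) :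
    sy σ' t p w = lam • sy σ t (gmap lam p) w := by
  unfold sy
  rw [fderiv_scale lam lam (σ t) (σ' t) hσ' p hd]
  simp [Gclm, Prod.map]

lemma sx_scale (hlam : 0 < lam) (hσ' : ∀ p, σ' t p = lam • σ t (gmap lam p))
    (hd : DifferentiableAt ℝ (σ t) (gmap lam p)) (v : Fin n → ℝ) :
    sx σ' t p v = sx σ t (gmap lam p) v := by
  unfold sx
  rw [fderiv_scale lam lam (σ t) (σ' t) hσ' p hd]
  have h : (Gclm (n := n) (m := m) (d := d) lam) ((v, 0, 0) : Arg n m d)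
      = lam⁻¹ • ((v, 0, 0) : Arg n m d) := by
    simp [Gclm, Prod.map, Prod.smul_mk]
  rw [ContinuousLinearMap.smul_apply, ContinuousLinearMap.comp_apply, h, map_smul,
    smul_smul, mul_inv_cancel₀ hlam.ne', one_smul]

lemma mz_scale (hμ' : ∀ p, μ' t p = lam • μ t (gmap lam p))
    (hd : DifferentiableAt ℝ (μ t) (gmap lam p)) (ζ : TensZ n m d 0) :
    mz μ' t p ζ = lam • mz μ t (gmap lam p) ζ := by
  unfold mz
  rw [fderiv_scale lam lam (μ t) (μ' t) hμ' p hd]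
  simp [Gclm, Prod.map]

lemma my_scale (hμ' : ∀ p, μ' t p = lam • μ t (gmap lam p))
    (hd : DifferentiableAt ℝ (μ t) (gmap lam p)) (w : Tens n m 0) :
    my μ' t p w = lam • my μ t (gmap lam p) w := by
  unfold my
  rw [fderiv_scale lam lam (μ t) (μ' t) hμ' p hd]
  simp [Gclm, Prod.map]

lemma mx_scale (hlam : 0 < lam) (hμ' : ∀ p, μ' t p = lam • μ t (gmap lam p))
    (hd : DifferentiableAt ℝ (μ t) (gmap lam p)) (v : Fin n → ℝ) :
    mx μ' t p v = mx μ t (gmap lam p) v := by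
  unfold mx
  rw [fderiv_scale lam lam (μ t) (μ' t) hμ' p hd]
  have h : (Gclm (n := n) (m := m) (d := d) lam) ((v, 0, 0) : Arg n m d)
      = lam⁻¹ • ((v, 0, 0) : Arg n m d) := by
    simp [Gclm, Prod.map, Prod.smul_mk]
  rw [ContinuousLinearMap.smul_apply, ContinuousLinearMap.comp_apply, h, map_smul,
    smul_smul, mul_inv_cancel₀ hlam.ne', one_smul]

end Scale
section MatScale

variable {n m d : ℕ} {lam : ℝ}
variable {σ σ' : ℝ → Arg n m d → Sig n d}
variable {μ μ' : ℝ → Arg n m d → (Fin n → ℝ)}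
variable {t : ℝ} {p : Arg n m d}

lemma mat1_smul (c : ℝ) (v : Tens n m 1) (a : Fin m) (i : Fin n) :
    mat1 (c • v) a i = c * mat1 v a i := rfl

lemma Gmat_scale (hσ' : ∀ p, σ' t p = lam • σ t (gmap lam p))
    (hd : DifferentiableAt ℝ (σ t) (gmap lam p)) (y1 : Tens n m 1) :
    Gmat σ' t p y1 = Gmat σ t (gmap lam p) (lam • y1) := by
  unfold Gmat
  congr 1
  funext ab pq
  simp only [Matrix.of_apply]
  refine Finset.sum_congr rfl fun i _ => ?_
  rw [sz_scale hσ' hd, mat1_smul]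
  simp only [Pi.smul_apply, smul_eq_mul]
  ring

lemma Rh_scale (hlam : 0 < lam) (hσ' : ∀ p, σ' t p = lam • σ t (gmap lam p))
    (hd : DifferentiableAt ℝ (σ t) (gmap lam p)) (y1 : Tens n m 1) (z1 : TensZ n m d 1) :
    Rh σ' t p y1 z1 = lam⁻¹ • Rh σ t (gmap lam p) (lam • y1) (lam • z1) := by
  funext a b c
  unfold Rh
  simp only [Pi.smul_apply, smul_eq_mul, mat1_smul, sx_scale hlam hσ' hd, sy_scale hσ' hd,
    mul_add, Finset.mul_sum]
  have h1 : ∀ i : Fin n,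
      lam⁻¹ * (lam * mat1 y1 a i * sx σ t (gmap lam p) (eX (c 0)) i b)
        = mat1 y1 a i * sx σ t (gmap lam p) (eX (c 0)) i b := by
    intro i; field_simp
  have h2 : ∀ j : Fin m,
      lam⁻¹ * ((∑ i, lam * mat1 y1 a i * sy σ t (gmap lam p) (eY j) i b)
          * (lam * mat1 y1 j (c 0)))
        = (∑ i, mat1 y1 a i * (lam * sy σ t (gmap lam p) (eY j) i b))
          * mat1 y1 j (c 0) := by
    intro j
    rw [Finset.sum_mul, Finset.mul_sum, Finset.sum_mul]
    refine Finset.sum_congr rfl fun i _ => ?_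
    field_simp
  simp only [h1, h2]
  field_simp
  congr 2
  refine Finset.sum_congr rfl fun j _ => ?_
  congr 1
  refine Finset.sum_congr rfl fun i _ => ?_
  ring

lemma h1_scale (hlam : 0 < lam) (hσ' : ∀ p, σ' t p = lam • σ t (gmap lam p))
    (hd : DifferentiableAt ℝ (σ t) (gmap lam p)) (y1 : Tens n m 1) (z1 : TensZ n m d 1) :
    h1 σ' t p y1 z1 = lam⁻¹ • h1 σ t (gmap lam p) (lam • y1) (lam • z1) := by
  funext a b c
  unfold h1
  rw [Gmat_scale hσ' hd, Rh_scale hlam hσ' hd]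
  simp only [Pi.smul_apply, smul_eq_mul, Finset.mul_sum]
  refine Finset.sum_congr rfl fun pq _ => ?_
  ring

lemma Bmat_scale (hlam : 0 < lam) (hσ' : ∀ p, σ' t p = lam • σ t (gmap lam p))
    (hd : DifferentiableAt ℝ (σ t) (gmap lam p)) (y1 : Tens n m 1) (z1 : TensZ n m d 1)
    (b : Fin d) :
    Bmat σ' t p y1 z1 b = Bmat σ t (gmap lam p) (lam • y1) (lam • z1) b := by
  funext i c
  unfold Bmat
  rw [h1_scale hlam hσ' hd]
  simp only [sx_scale hlam hσ' hd, sz_scale hσ' hd, sy_scale hσ' hd, Pi.smul_apply,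
    smul_eq_mul, mat1_smul]
  congr 1
  · congr 1
    refine Finset.sum_congr rfl fun a _ => ?_
    ring
  · refine Finset.sum_congr rfl fun pq _ => ?_
    field_simp

lemma Amat_scale (hlam : 0 < lam) (hσ' : ∀ p, σ' t p = lam • σ t (gmap lam p))
    (hμ' : ∀ p, μ' t p = lam • μ t (gmap lam p))
    (hdσ : DifferentiableAt ℝ (σ t) (gmap lam p))
    (hdμ : DifferentiableAt ℝ (μ t) (gmap lam p))
    (y1 : Tens n m 1) (z1 : TensZ n m d 1) :
    Amat μ' σ' t p y1 z1 = Amat μ σ t (gmap lam p) (lam • y1) (lam • z1) := by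
  funext i c
  unfold Amat
  rw [h1_scale hlam hσ' hdσ]
  simp only [mx_scale hlam hμ' hdμ, my_scale hμ' hdμ, mz_scale hμ' hdμ, Pi.smul_apply,
    smul_eq_mul, mat1_smul]
  congr 1
  · congr 1
    refine Finset.sum_congr rfl fun a _ => ?_
    ring
  · refine Finset.sum_congr rfl fun pq _ => ?_
    field_simp

lemma mulRight_smul_left {k : ℕ} (c : ℝ) (y : Tens n m (k + 1)) (A : Fin n → Fin n → ℝ) :
    mulRight (c • y) A = c • mulRight y A := by
  funext a c'
  unfold mulRight
  simp only [Pi.smul_apply, smul_eq_mul, Finset.mul_sum]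
  refine Finset.sum_congr rfl fun j _ => ?_
  ring

lemma hK_scale (hlam : 0 < lam) (hσ' : ∀ p, σ' t p = lam • σ t (gmap lam p))
    (hd : DifferentiableAt ℝ (σ t) (gmap lam p)) (y1 : Tens n m 1) (z1 : TensZ n m d 1)
    {K : ℕ} (yk : Tens n m (K + 1)) (zk : TensZ n m d (K + 1)) :
    hK σ' t p y1 z1 yk zk
      = (lam ^ (K + 1))⁻¹ •
          hK σ t (gmap lam p) (lam • y1) (lam • z1)
            ((lam ^ (K + 1)) • yk) ((lam ^ (K + 1)) • zk) := by
  have hpow : (lam : ℝ) ^ (K + 1) ≠ 0 := pow_ne_zero _ hlam.ne'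
  funext a b c
  unfold hK
  rw [Bmat_scale hlam hσ' hd]
  simp only [mulRight_smul_left, Pi.smul_apply, smul_eq_mul, mul_add]
  rw [← mul_assoc, ← mul_assoc, inv_mul_cancel₀ hpow, one_mul, one_mul]

lemma hGen_scale (hlam : 0 < lam) (hσ' : ∀ p, σ' t p = lam • σ t (gmap lam p))
    (hd : DifferentiableAt ℝ (σ t) (gmap lam p)) (y1 : Tens n m 1) (z1 : TensZ n m d 1)
    {K : ℕ} (yk : Tens n m (K + 1)) (zk : TensZ n m d (K + 1)) :
    hGen σ' t p y1 z1 yk zk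
      = (lam ^ (K + 1))⁻¹ •
          hGen σ t (gmap lam p) (lam • y1) (lam • z1)
            ((lam ^ (K + 1)) • yk) ((lam ^ (K + 1)) • zk) := by
  cases K with
  | zero =>
    simp only [hGen, zero_add, pow_one]
    exact h1_scale hlam hσ' hd yk zk
  | succ K =>
    simp only [hGen]
    exact hK_scale hlam hσ' hd y1 z1 yk zk

end MatScale
section OpN

variable {n m d : ℕ}

/-- `opN` as the norm of a linear map. -/
noncomputable def opLin (n m : ℕ) :
    Tens n m 1 →ₗ[ℝ] (EuclideanSpace ℝ (Fin n) →L[ℝ] EuclideanSpace ℝ (Fin m)) where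
  toFun v := LinearMap.toContinuousLinearMap (Matrix.toEuclideanLin (mat1 v))
  map_add' v w := by
    show LinearMap.toContinuousLinearMap (Matrix.toEuclideanLin (mat1 (v + w))) = _
    rw [show mat1 (v + w) = mat1 v + mat1 w from rfl, map_add, map_add]
  map_smul' c v := by
    show LinearMap.toContinuousLinearMap (Matrix.toEuclideanLin (mat1 (c • v)))
      = c • LinearMap.toContinuousLinearMap (Matrix.toEuclideanLin (mat1 v))
    rw [show mat1 (c • v) = c • mat1 v from rfl, map_smul, map_smul]

lemma opN_eq (v : Tens n m 1) : opN v = ‖opLin n m v‖ := rfl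

lemma continuous_opN : Continuous (opN (n := n) (m := m)) := by
  have := (opLin n m).continuous_of_finiteDimensional
  exact this.norm

lemma opN_smul (c : ℝ) (v : Tens n m 1) : opN (c • v) = |c| * opN v := by
  rw [opN_eq, opN_eq, map_smul]
  exact norm_smul c ((opLin n m) v)

end OpN

section Sclm

variable {n m d : ℕ}

/-- The scaling map on `EE` as a continuous linear map. -/
noncomputable def Sclm (lam : ℝ) (i : ℕ) : EE n m d i →L[ℝ] EE n m d i :=
  ((lam⁻¹ : ℝ) • ContinuousLinearMap.id ℝ (Fin n → ℝ)).prodMap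
    ((ContinuousLinearMap.pi fun j : Fin (i + 1) =>
        ((lam ^ (j : ℕ) : ℝ)) • ContinuousLinearMap.proj (R := ℝ)
          (φ := fun j : Fin (i + 1) => Tens n m j) j).prodMap
      (ContinuousLinearMap.pi fun j : Fin (i + 1) =>
        ((lam ^ (j : ℕ) : ℝ)) • ContinuousLinearMap.proj (R := ℝ)
          (φ := fun j : Fin (i + 1) => TensZ n m d j) j))

lemma Sclm_apply (lam : ℝ) (i : ℕ) (q : EE n m d i) :
    Sclm lam i q = (lam⁻¹ • q.1, fun j => (lam ^ (j.val)) • q.2.1 j,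
      fun j => (lam ^ (j.val)) • q.2.2 j) := by
  simp [Sclm, Prod.map]

end Sclm
section DScale

variable {n m d : ℕ} {lam : ℝ} {i : ℕ}

lemma Sclm_x (lam : ℝ) (i : ℕ) (v : Fin n → ℝ) :
    Sclm lam i ((v, 0, 0) : EE n m d i) = lam⁻¹ • ((v, 0, 0) : EE n m d i) := by
  rw [Sclm_apply]
  refine Prod.ext rfl (Prod.ext ?_ ?_) <;> · funext j; simp

lemma Sclm_y (lam : ℝ) (i : ℕ) (j : Fin (i + 1)) (w : Tens n m j) :
    Sclm lam i ((0, Pi.single j w, 0) : EE n m d i)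
      = (lam ^ (j : ℕ)) • ((0, Pi.single j w, 0) : EE n m d i) := by
  rw [Sclm_apply]
  refine Prod.ext (by simp) (Prod.ext ?_ ?_)
  · funext j'
    by_cases h : j' = j
    · subst h; simp
    · simp [Pi.single_eq_of_ne h]
  · funext j'; simp

lemma Sclm_z (lam : ℝ) (i : ℕ) (j : Fin (i + 1)) (w : TensZ n m d j) :
    Sclm lam i ((0, 0, Pi.single j w) : EE n m d i)
      = (lam ^ (j : ℕ)) • ((0, 0, Pi.single j w) : EE n m d i) := by
  rw [Sclm_apply]
  refine Prod.ext (by simp) (Prod.ext ?_ ?_)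
  · funext j'; simp
  · funext j'
    by_cases h : j' = j
    · subst h; simp
    · simp [Pi.single_eq_of_ne h]

variable (D : EE n m d i →L[ℝ] Tens n m i)

lemma Dx_scale (v : Fin n → ℝ) :
    Dx ((lam ^ i)⁻¹ • D.comp (Sclm lam i)) v = (lam ^ (i + 1))⁻¹ • Dx D v := by
  unfold Dx
  rw [ContinuousLinearMap.smul_apply, ContinuousLinearMap.comp_apply, Sclm_x, map_smul,
    smul_smul, pow_succ, mul_inv]

lemma Dyp_scale (j : Fin (i + 1)) (w : Tens n m j) :
    Dyp ((lam ^ i)⁻¹ • D.comp (Sclm lam i)) j w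
      = ((lam ^ i)⁻¹ * lam ^ (j : ℕ)) • Dyp D j w := by
  unfold Dyp
  rw [ContinuousLinearMap.smul_apply, ContinuousLinearMap.comp_apply, Sclm_y, map_smul,
    smul_smul]

lemma Dzp_scale (j : Fin (i + 1)) (w : TensZ n m d j) :
    Dzp ((lam ^ i)⁻¹ • D.comp (Sclm lam i)) j w
      = ((lam ^ i)⁻¹ * lam ^ (j : ℕ)) • Dzp D j w := by
  unfold Dzp
  rw [ContinuousLinearMap.smul_apply, ContinuousLinearMap.comp_apply, Sclm_z, map_smul,
    smul_smul]

lemma Dyp_smul (c : ℝ) (j : Fin (i + 1)) (w : Tens n m j) :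
    Dyp D j (c • w) = c • Dyp D j w := by
  unfold Dyp
  have h : ((0, Pi.single j (c • w), 0) : EE n m d i)
      = c • ((0, Pi.single j w, 0) : EE n m d i) := by
    rw [Pi.single_smul]
    refine Prod.ext (by simp) (Prod.ext rfl (by simp))
  rw [h, map_smul]

lemma Dzp_smul (c : ℝ) (j : Fin (i + 1)) (w : TensZ n m d j) :
    Dzp D j (c • w) = c • Dzp D j w := by
  unfold Dzp
  have h : ((0, 0, Pi.single j (c • w)) : EE n m d i)
      = c • ((0, 0, Pi.single j w) : EE n m d i) := by
    rw [Pi.single_smul]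
    refine Prod.ext (by simp) (Prod.ext (by simp) rfl)
  rw [h, map_smul]

lemma appX_scale :
    appX (Dx ((lam ^ i)⁻¹ • D.comp (Sclm lam i))) = (lam ^ (i + 1))⁻¹ • appX (Dx D) := by
  funext a c
  simp only [appX]
  rw [Dx_scale]
  rfl

lemma appY_Dyp_smul_arg (c : ℝ) (j : Fin (i + 1)) (y : Tens n m ((j : ℕ) + 1)) :
    appY (Dyp D j) (c • y) = c • appY (Dyp D j) y := by
  funext a c'
  simp only [appY]
  rw [show (fun a' c'' => (c • y) a' (Fin.snoc c'' (c' (Fin.last i))))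
      = c • (fun a' c'' => y a' (Fin.snoc c'' (c' (Fin.last i)))) from rfl, Dyp_smul]
  rfl

lemma appZ_Dzp_smul_arg (c : ℝ) (j : Fin (i + 1)) (z : TensZ n m d ((j : ℕ) + 1)) :
    appZ (Dzp D j) (c • z) = c • appZ (Dzp D j) z := by
  funext a c'
  simp only [appZ]
  rw [show (fun a' b' c'' => (c • z) a' b' (Fin.snoc c'' (c' (Fin.last i))))
      = c • (fun a' b' c'' => z a' b' (Fin.snoc c'' (c' (Fin.last i)))) from rfl, Dzp_smul]
  rfl

lemma appY_scale (hlam : 0 < lam) (j : Fin (i + 1)) (y : Tens n m ((j : ℕ) + 1)) :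
    appY (Dyp ((lam ^ i)⁻¹ • D.comp (Sclm lam i)) j) y
      = (lam ^ (i + 1))⁻¹ • appY (Dyp D j) ((lam ^ ((j : ℕ) + 1)) • y) := by
  have hne : lam ≠ 0 := hlam.ne'
  rw [appY_Dyp_smul_arg]
  funext a c
  simp only [appY]
  rw [Dyp_scale]
  simp only [Pi.smul_apply, smul_eq_mul]
  rw [← mul_assoc]
  congr 1
  rw [pow_succ, pow_succ]
  field_simp

lemma appZ_scale (hlam : 0 < lam) (j : Fin (i + 1)) (z : TensZ n m d ((j : ℕ) + 1)) :
    appZ (Dzp ((lam ^ i)⁻¹ • D.comp (Sclm lam i)) j) z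
      = (lam ^ (i + 1))⁻¹ • appZ (Dzp D j) ((lam ^ ((j : ℕ) + 1)) • z) := by
  have hne : lam ≠ 0 := hlam.ne'
  rw [appZ_Dzp_smul_arg]
  funext a c
  simp only [appZ]
  rw [Dzp_scale]
  simp only [Pi.smul_apply, smul_eq_mul]
  rw [← mul_assoc]
  congr 1
  rw [pow_succ, pow_succ]
  field_simp

lemma mulRight_slice (c : ℝ) {k : ℕ} (z : TensZ n m d (k + 1)) (b : Fin d)
    (A : Fin n → Fin n → ℝ) :
    mulRight (fun a c' => (c • z) a b c') A = c • mulRight (fun a c' => z a b c') A := by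
  rw [show (fun a c' => (c • z) a b c') = c • (fun a c' => z a b c') from rfl,
    mulRight_smul_left]

end DScale
section PhiStepScale

variable {n m d : ℕ} {lam : ℝ} {i : ℕ}
variable {σ σ' : ℝ → Arg n m d → Sig n d} {μ μ' : ℝ → Arg n m d → (Fin n → ℝ)} {t : ℝ}

set_option maxHeartbeats 1000000 in
lemma phiStep_scale (hlam : 0 < lam)
    (hσ' : ∀ p, σ' t p = lam • σ t (gmap lam p))
    (hμ' : ∀ p, μ' t p = lam • μ t (gmap lam p))
    (hdσ : ∀ q, DifferentiableAt ℝ (σ t) q) (hdμ : ∀ q, DifferentiableAt ℝ (μ t) q)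
    (D : EE n m d i →L[ℝ] Tens n m i)
    (x : Fin n → ℝ) (Y : (j : Fin (i + 2)) → Tens n m j)
    (Z : (j : Fin (i + 2)) → TensZ n m d j) :
    phiStep μ' σ' t ((lam ^ i)⁻¹ • D.comp (Sclm lam i)) x Y Z
      = (lam ^ (i + 1))⁻¹ •
          phiStep μ σ t D (lam⁻¹ • x) (fun j => (lam ^ (j : ℕ)) • Y j)
            (fun j => (lam ^ (j : ℕ)) • Z j) := by
  have hne : lam ≠ 0 := hlam.ne'
  have hpow : lam ^ (i + 1) ≠ 0 := pow_ne_zero _ hne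
  have e0 : ((⟨0, by omega⟩ : Fin (i + 2)) : ℕ) = 0 := rfl
  have e1 : ((⟨1, by omega⟩ : Fin (i + 2)) : ℕ) = 1 := rfl
  have hA : Amat μ' σ' t (x, Y ⟨0, by omega⟩, Z ⟨0, by omega⟩)
        (Y ⟨1, by omega⟩) (Z ⟨1, by omega⟩)
      = Amat μ σ t (lam⁻¹ • x, Y ⟨0, by omega⟩, Z ⟨0, by omega⟩)
        (lam • Y ⟨1, by omega⟩) (lam • Z ⟨1, by omega⟩) := by
    rw [Amat_scale hlam hσ' hμ' (hdσ _) (hdμ _)]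
    rfl
  have hB : ∀ b : Fin d, Bmat σ' t (x, Y ⟨0, by omega⟩, Z ⟨0, by omega⟩)
        (Y ⟨1, by omega⟩) (Z ⟨1, by omega⟩) b
      = Bmat σ t (lam⁻¹ • x, Y ⟨0, by omega⟩, Z ⟨0, by omega⟩)
        (lam • Y ⟨1, by omega⟩) (lam • Z ⟨1, by omega⟩) b := by
    intro b
    rw [Bmat_scale hlam hσ' (hdσ _)]
    rfl
  have hH' : ∀ j : Fin (i + 1),
      (lam ^ ((j : ℕ) + 1)) •
          hGen σ' t (x, Y ⟨0, by omega⟩, Z ⟨0, by omega⟩)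
            (Y ⟨1, by omega⟩) (Z ⟨1, by omega⟩) (Y j.succ) (Z j.succ)
        = hGen σ t (lam⁻¹ • x, Y ⟨0, by omega⟩, Z ⟨0, by omega⟩)
            (lam • Y ⟨1, by omega⟩) (lam • Z ⟨1, by omega⟩)
            ((lam ^ ((j : ℕ) + 1)) • Y j.succ) ((lam ^ ((j : ℕ) + 1)) • Z j.succ) := by
    intro j
    rw [hGen_scale (K := (j : ℕ)) hlam hσ' (hdσ _) _ _ (Y j.succ) (Z j.succ),
      smul_inv_smul₀ (pow_ne_zero _ hne)]
    rfl
  have hYb : ∀ M : Fin n → Fin n → ℝ,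
      mulRight (Y (Fin.last (i + 1))) M
        = (lam ^ (i + 1))⁻¹ • mulRight ((lam ^ (i + 1)) • Y (Fin.last (i + 1))) M := by
    intro M
    rw [mulRight_smul_left, inv_smul_smul₀ hpow]
  have hZb : ∀ (b : Fin d) (M : Fin n → Fin n → ℝ),
      mulRight (fun a c => Z (Fin.last (i + 1)) a b c) M
        = (lam ^ (i + 1))⁻¹ •
            mulRight (fun a c => ((lam ^ (i + 1)) • Z (Fin.last (i + 1))) a b c) M := by
    intro b M
    rw [mulRight_slice, inv_smul_smul₀ hpow]
  unfold phiStep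
  simp only [Fin.val_succ, Fin.val_last, e0, e1, pow_zero, one_smul, pow_one]
  simp only [appX_scale, appY_scale D hlam, appZ_scale D hlam]
  simp only [hH', hA, hB, hYb, hZb]
  simp only [← smul_add, ← Finset.smul_sum, ← smul_sub]

end PhiStepScale
/-- **Scaling identities (proof of Theorem 7.1).**  Assume `(μ,σ,f)` satisfies
`(k-MLLC)` and let `λ > 0`.  Define the transformed coefficients
`μ̄(t,x,y,z) := λ·μ(t,λ⁻¹x,y,z)`, `σ̄(t,x,y,z) := λ·σ(t,λ⁻¹x,y,z)` and
`f̄(t,x,y,z) := f(t,λ⁻¹x,y,z)` (note `L_{σ̄,z} = λ·L_{σ,z}`), and let `h̄⁽ⁱ⁾, φ̄⁽ⁱ⁾` be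
built from `(μ̄,σ̄,f̄)` by the same recursion as `h⁽ⁱ⁾, φ⁽ⁱ⁾` are built from `(μ,σ,f)`.
Then for all `i ∈ {0,…,k}` and all admissible arguments (`θ̄_i ∈ Θ̄_i`, the scaled
argument lying in `Θ_i`):
`h̄⁽ⁱ⁾(t,x,y⁽⁰⁾,z⁽⁰⁾,…,y⁽ⁱ⁾,z⁽ⁱ⁾) = λ^{−i} h⁽ⁱ⁾(t,λ⁻¹x,λ⁰y⁽⁰⁾,λ⁰z⁽⁰⁾,…,λⁱy⁽ⁱ⁾,λⁱz⁽ⁱ⁾)`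
for `i ≥ 1`, and
`φ̄⁽ⁱ⁾(t,x,y⁽⁰⁾,z⁽⁰⁾,…,y⁽ⁱ⁾,z⁽ⁱ⁾) = λ^{−i} φ⁽ⁱ⁾(t,λ⁻¹x,λ⁰y⁽⁰⁾,λ⁰z⁽⁰⁾,…,λⁱy⁽ⁱ⁾,λⁱz⁽ⁱ⁾)`. -/
theorem scaling_of_h_and_phi
    {n m d : ℕ} {T : ℝ} (hT : 0 < T) (k : ℕ)
    (μ : ℝ → Arg n m d → (Fin n → ℝ)) (σ : ℝ → Arg n m d → Sig n d)
    (f : ℝ → Arg n m d → Tens n m 0) (Lz : ℝ)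
    (hMLLC : MLLC n m d k T μ σ f Lz)
    (lam : ℝ) (hlam : 0 < lam)
    (μ' : ℝ → Arg n m d → (Fin n → ℝ)) (σ' : ℝ → Arg n m d → Sig n d)
    (f' : ℝ → Arg n m d → Tens n m 0)
    (hμ' : ∀ t p, μ' t p = lam • μ t (lam⁻¹ • p.1, p.2.1, p.2.2))
    (hσ' : ∀ t p, σ' t p = lam • σ t (lam⁻¹ • p.1, p.2.1, p.2.2))
    (hf' : ∀ t p, f' t p = f t (lam⁻¹ • p.1, p.2.1, p.2.2))
    (φ φ' : (i : ℕ) → PhiFun n m d i)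
    (hchain : IsPhiChain n m d k T Lz μ σ f φ)
    (hchain' : IsPhiChain n m d k T (lam * Lz) μ' σ' f' φ') :
    -- scaling of h⁽¹⁾
    (1 ≤ k → ∀ t ∈ Set.Icc (0:ℝ) T, ∀ (x : Fin n → ℝ) (y0 : Tens n m 0)
      (z0 : TensZ n m d 0) (y1 : Tens n m 1) (z1 : TensZ n m d 1),
      lam * Lz * opN y1 < 1 →
      h1 σ' t (x, y0, z0) y1 z1
        = lam⁻¹ • h1 σ t (lam⁻¹ • x, y0, z0) (lam • y1) (lam • z1)) ∧
    -- scaling of h⁽ⁱ⁾ for i = K + 2 ≥ 2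
    (∀ K : ℕ, K + 2 ≤ k → ∀ t ∈ Set.Icc (0:ℝ) T, ∀ (x : Fin n → ℝ) (y0 : Tens n m 0)
      (z0 : TensZ n m d 0) (y1 : Tens n m 1) (z1 : TensZ n m d 1),
      lam * Lz * opN y1 < 1 →
      ∀ (yk : Tens n m (K + 2)) (zk : TensZ n m d (K + 2)),
        hK σ' t (x, y0, z0) y1 z1 yk zk
          = (lam ^ (K + 2))⁻¹ •
              hK σ t (lam⁻¹ • x, y0, z0) (lam • y1) (lam • z1)
                ((lam ^ (K + 2)) • yk) ((lam ^ (K + 2)) • zk)) ∧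
    -- scaling of φ⁽ⁱ⁾
    (∀ i : ℕ, i ≤ k → ∀ t ∈ Set.Icc (0:ℝ) T, ∀ (x : Fin n → ℝ)
      (Y : (j : Fin (i + 1)) → Tens n m j) (Z : (j : Fin (i + 1)) → TensZ n m d j),
      (∀ hi : 1 ≤ i, lam * Lz * opN (Y ⟨1, Nat.succ_le_succ hi⟩) < 1) →
      φ' i t (x, Y, Z)
        = (lam ^ i)⁻¹ •
            φ i t (lam⁻¹ • x, fun j => (lam ^ (j : ℕ)) • Y j,
              fun j => (lam ^ (j : ℕ)) • Z j)) := by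
  have hne : lam ≠ 0 := hlam.ne'
  have hσg : ∀ t (p : Arg n m d), σ' t p = lam • σ t (gmap lam p) := fun t p => hσ' t p
  have hμg : ∀ t (p : Arg n m d), μ' t p = lam • μ t (gmap lam p) := fun t p => hμ' t p
  refine ⟨?_, ?_, ?_⟩
  · -- h¹ scaling
    intro hk t ht x y0 z0 y1 z1 _
    have hdσ : DifferentiableAt ℝ (σ t) (gmap lam (x, y0, z0)) :=
      (((hMLLC.smooth_sigma t ht).differentiable (by exact_mod_cast (show k ≠ 0 by omega))) _)
    exact h1_scale hlam (hσg t) hdσ y1 z1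
  · -- h^(K+2) scaling
    intro K hK2 t ht x y0 z0 y1 z1 _ yk zk
    have hk1 : 1 ≤ k := by omega
    have hdσ : DifferentiableAt ℝ (σ t) (gmap lam (x, y0, z0)) :=
      (((hMLLC.smooth_sigma t ht).differentiable (by exact_mod_cast (show k ≠ 0 by omega))) _)
    exact hK_scale hlam (hσg t) hdσ y1 z1 yk zk
  · -- φ scaling
    intro i
    induction i with
    | zero =>
      intro _ t ht x Y Z _
      have e0 : ((⟨0, by omega⟩ : Fin 1) : ℕ) = 0 := rfl
      rw [hchain'.base t ht, hchain.base t ht, hf']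
      simp [e0]
    | succ i IH =>
      intro hik t ht x Y Z hcond
      have hik' : i ≤ k := by omega
      have hk1 : 1 ≤ k := by omega
      have hdσ : ∀ q, DifferentiableAt ℝ (σ t) q :=
        fun q => ((hMLLC.smooth_sigma t ht).differentiable (by exact_mod_cast (show k ≠ 0 by omega))) q
      have hdμ : ∀ q, DifferentiableAt ℝ (μ t) q :=
        fun q => ((hMLLC.smooth_mu t ht).differentiable (by exact_mod_cast (show k ≠ 0 by omega))) q
      have hop : lam * Lz * opN (Y ⟨1, by omega⟩) < 1 :=
        hcond (Nat.succ_le_succ (Nat.zero_le i))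
      obtain ⟨D', hD'deriv, hD'eq⟩ := hchain'.step i hik t ht x Y Z hop
      have hopS : Lz * opN ((lam ^ ((⟨1, by omega⟩ : Fin (i + 2)) : ℕ)) • Y ⟨1, by omega⟩)
          < 1 := by
        have hpowone : (lam ^ ((⟨1, by omega⟩ : Fin (i + 2)) : ℕ)) = lam := pow_one lam
        rw [hpowone, opN_smul, abs_of_pos hlam]
        calc Lz * (lam * opN (Y ⟨1, by omega⟩))
            = lam * Lz * opN (Y ⟨1, by omega⟩) := by ring
          _ < 1 := hop
      obtain ⟨D, hDderiv, hDeq⟩ := hchain.step i hik t ht (lam⁻¹ • x)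
        (fun j => (lam ^ (j : ℕ)) • Y j) (fun j => (lam ^ (j : ℕ)) • Z j) hopS
      have hSp : Sclm lam i ((x, fun j => Y j.castSucc, fun j => Z j.castSucc) : EE n m d i)
          = (lam⁻¹ • x,
              fun j : Fin (i + 1) => (lam ^ ((j.castSucc : Fin (i + 2)) : ℕ)) • Y j.castSucc,
              fun j : Fin (i + 1) => (lam ^ ((j.castSucc : Fin (i + 2)) : ℕ)) • Z j.castSucc)
          := by
        rw [Sclm_apply]
        refine Prod.ext rfl (Prod.ext ?_ ?_) <;>
          · funext j; simp [Fin.coe_castSucc]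
      have hcomp : HasFDerivAt (fun q => (lam ^ i)⁻¹ • φ i t (Sclm lam i q))
          ((lam ^ i)⁻¹ • D.comp (Sclm lam i))
          ((x, fun j => Y j.castSucc, fun j => Z j.castSucc) : EE n m d i) := by
        have h1 : HasFDerivAt (φ i t) D
            (Sclm lam i ((x, fun j => Y j.castSucc, fun j => Z j.castSucc) : EE n m d i)) := by
          rw [hSp]; exact hDderiv
        refine ((h1.comp _ (Sclm lam i).hasFDerivAt).const_smul ((lam ^ i)⁻¹)).congr_of_eventuallyEq ?_
        filter_upwards with q
        rfl
      have heq : φ' i t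
          =ᶠ[nhds ((x, fun j => Y j.castSucc, fun j => Z j.castSucc) : EE n m d i)]
            fun q => (lam ^ i)⁻¹ • φ i t (Sclm lam i q) := by
        by_cases h1i : 1 ≤ i
        · have hcont : Continuous (fun q : EE n m d i =>
              lam * Lz * opN (q.2.1 ⟨1, Nat.succ_le_succ h1i⟩)) :=
            continuous_const.mul (continuous_opN.comp
              ((continuous_apply _).comp (continuous_fst.comp continuous_snd)))
          have hopen : IsOpen {q : EE n m d i |
              lam * Lz * opN (q.2.1 ⟨1, Nat.succ_le_succ h1i⟩) < 1} :=
            isOpen_lt hcont continuous_const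
          have hmem : ((x, fun j => Y j.castSucc, fun j => Z j.castSucc) : EE n m d i)
              ∈ {q : EE n m d i |
                  lam * Lz * opN (q.2.1 ⟨1, Nat.succ_le_succ h1i⟩) < 1} := hop
          filter_upwards [hopen.mem_nhds hmem] with q hq
          have := IH hik' t ht q.1 q.2.1 q.2.2 (fun _ => hq)
          rw [Sclm_apply]
          exact this
        · filter_upwards with q
          have := IH hik' t ht q.1 q.2.1 q.2.2 (fun hi => absurd hi h1i)
          rw [Sclm_apply]
          exact this
      have hcand : HasFDerivAt (φ' i t) ((lam ^ i)⁻¹ • D.comp (Sclm lam i))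
          ((x, fun j => Y j.castSucc, fun j => Z j.castSucc) : EE n m d i) :=
        hcomp.congr_of_eventuallyEq heq
      have hunique : D' = (lam ^ i)⁻¹ • D.comp (Sclm lam i) := hD'deriv.unique hcand
      rw [hD'eq, hunique, hDeq]
      exact phiStep_scale hlam (hσg t) (hμg t) hdσ hdμ D x Y Z

end DecouplingFBSDE
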